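/- arXiv:1510.03261 — 3 statements merged into one kernel-verified Lean document; each statement's English description precedes it below -/
import Mathlib

section
/- Let A be a unital graded associative algebra and D a homogeneous linear operator on A. If D is a differential operator of noncommutative order at most l for some l ≥ 2 (i.e., b_{l+1}^D = 0 identically), then D is a differential operator of noncommutative order at most 2, i.e., b_3^D = 0 identically. -/
/-- Product of a nonempty list of elements of a ring, junk value `0` on `[]`. -/
def listProd {A : Type*} [Ring A] : List A → A
  | [] => 0
  | a :: t => t.foldl (· * ·) a

/-- The Börjeson product `b_n^D(a₁, mid, aₙ)` (with `n = mid.length + 2 ≥ 2`), where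
`ε = (−1)^{|a₁||D|}` is the Koszul sign attached to the first argument. -/
def bor {A : Type*} [Ring A] (D : A → A) (ε : ℤˣ) (a1 : A) (mid : List A) (an : A) : A :=
  D (listProd (a1 :: (mid ++ [an]))) - D (listProd (a1 :: mid)) * an
    - (ε : ℤ) • (a1 * D (listProd (mid ++ [an])))
    + (ε : ℤ) • (a1 * D (listProd mid) * an)

lemma foldl_ones {A : Type*} [Ring A] (n : ℕ) (x : A) (t : List A) :
    (List.replicate n 1 ++ t).foldl (· * ·) x = t.foldl (· * ·) x := by
  induction n generalizing x with
  | zero => simp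
  | succ n ih => simpa [List.replicate_succ] using ih (x * 1)

lemma foldl_ones' {A : Type*} [Ring A] (n : ℕ) (x : A) :
    (List.replicate n 1).foldl (· * ·) x = x := by
  simpa using foldl_ones n x []

/-- For a unital graded associative algebra `A` and a homogeneous operator `D` of degree
`dD`: if `D` has noncommutative order at most `l` for some `l ≥ 2` (i.e. `b_{l+1}^D = 0`
identically on homogeneous elements), then `D` has noncommutative order at most `2`,
i.e. `b_3^D = 0` identically on homogeneous elements. -/
theorem stmt9 {A : Type*} [Ring A] (D : A →+ A) (deg : A → ℤ) (dD : ℤ)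
    (homog : A → Prop) (h1 : homog 1) (hdeg1 : deg 1 = 0)
    (hmul : ∀ a b : A, homog a → homog b → homog (a * b))
    (l : ℕ) (hl : 2 ≤ l)
    (hord : ∀ (a1 a2 : A) (rest : List A) (an : A), rest.length = l - 2 →
      homog a1 → homog a2 → (∀ x ∈ rest, homog x) → homog an →
      bor (⇑D) ((-1 : ℤˣ) ^ (dD * deg a1)) a1 (a2 :: rest) an = 0) :
    ∀ a1 a2 a3 : A, homog a1 → homog a2 → homog a3 →
      bor (⇑D) ((-1 : ℤˣ) ^ (dD * deg a1)) a1 [a2] a3 = 0 := by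
  intro a1 a2 a3 h1' h2 h3
  have key := hord a1 a2 (List.replicate (l - 2) 1) a3 (by simp) h1' h2
    (fun x hx => by rw [List.eq_of_mem_replicate hx]; exact h1) h3
  have e : bor (⇑D) ((-1 : ℤˣ) ^ (dD * deg a1)) a1 (a2 :: List.replicate (l - 2) 1) a3
      = bor (⇑D) ((-1 : ℤˣ) ^ (dD * deg a1)) a1 [a2] a3 := by
    simp only [bor, listProd, List.cons_append, List.foldl_cons, List.append_eq, foldl_ones, foldl_ones', List.foldl, List.nil_append]
  rw [e] at key
  exact key
end

section
/- Let V be a graded vector space and T(V) = ⊕_{n≥1} V^{⊗n} the non-unital tensor algebra. For f ∈ (V*)^{⊗k} ⊗ T(V), viewed via the natural pairing as a map ι(f) : V^{⊗k} → T(V), define ρ(f) ∈ End(T(V)) by ρ(f)|_{V^{⊗n}} = Σ_{i+j+m=n, j=k} id^{⊗i} ⊗ ι(f) ⊗ id^{⊗m}. Then ρ(f) is a differential operator of noncommutative order at most k, i.e., the Börjeson product b_{k+1}^{ρ(f)} on the algebra T(V) vanishes identically. -/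
/-- The Börjeson products `b_n^D` as a function of the list `(a₁,…,aₙ)` of arguments
(`b₁^D = D`); signs are trivial here. -/
def borL {A : Type*} [Ring A] (D : A → A) : List A → A
  | [] => 0
  | [a] => D a
  | a1 :: b :: t =>
      D (listProd (a1 :: b :: t))
        - D (listProd ((a1 :: b :: t).dropLast)) * ((b :: t).getLast (List.cons_ne_nil b t))
        - a1 * D (listProd (b :: t))
        + a1 * D (listProd ((b :: t).dropLast)) * ((b :: t).getLast (List.cons_ne_nil b t))

lemma listProd_eq_prod {A : Type*} [Ring A] (a : A) (t : List A) :
    listProd (a :: t) = (a :: t).prod := by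
  show t.foldl (· * ·) a = _
  rw [List.prod_cons, List.prod_eq_foldl]
  rw [← mul_one a, List.foldl_assoc, mul_one]

/-- products of `n` generators, as a function of `n` and `v`. -/
def genP (R : Type*) [CommRing R] {V : Type*} [AddCommGroup V] [Module R V]
    (n : ℕ) (v : ℕ → V) : TensorAlgebra R V :=
  ((List.range n).map fun j => TensorAlgebra.ι R (v j)).prod

section
variable (R : Type*) [CommRing R] {V : Type*} [AddCommGroup V] [Module R V]

lemma genP_congr {n : ℕ} {v w : ℕ → V} (h : ∀ j < n, v j = w j) :
    genP R n v = genP R n w := by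
  unfold genP
  congr 1
  apply List.map_congr_left
  intro j hj
  rw [h j (List.mem_range.mp hj)]

lemma genP_add (a b : ℕ) (u : ℕ → V) :
    genP R (a + b) u = genP R a u * genP R b (fun j => u (a + j)) := by
  unfold genP
  rw [List.range_add, List.map_append, List.prod_append, List.map_map]
  rfl

lemma drop_range_add (a b d : ℕ) (hd : d ≤ a) :
    (List.range (a + b)).drop d = (List.range a).drop d ++ (List.range b).map (a + ·) := by
  rw [List.range_add, List.drop_append]
  simp [Nat.sub_eq_zero_of_le hd]

lemma drop_range_shift (a b d : ℕ) :
    (List.range (a + b)).drop (a + d) = ((List.range b).drop d).map (a + ·) := by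
  rw [List.range_add, List.drop_append]
  simp [List.drop_eq_nil_of_le, List.map_drop]

/-- The set of products of at least `m` generators. -/
def Sgen (m : ℕ) : Set (TensorAlgebra R V) := {y | ∃ n v, m ≤ n ∧ y = genP R n v}

lemma genP_mul (n m : ℕ) (v w : ℕ → V) :
    genP R n v * genP R m w
      = genP R (n + m) (fun j => if j < n then v j else w (j - n)) := by
  rw [genP_add]
  congr 1
  · exact genP_congr R fun j hj => (if_pos hj).symm
  · refine genP_congr R fun j hj => ?_
    rw [if_neg (by omega : ¬ n + j < n), Nat.add_sub_cancel_left]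

lemma mul_mem_span_Sgen {p q : ℕ} {x y : TensorAlgebra R V}
    (hx : x ∈ Submodule.span R (Sgen R p)) (hy : y ∈ Submodule.span R (Sgen R q)) :
    x * y ∈ Submodule.span R (Sgen R (p + q)) := by
  have h : Submodule.span R (Sgen R p) * Submodule.span R (Sgen R q)
      ≤ Submodule.span R (Sgen R (p + q) : Set (TensorAlgebra R V)) := by
    rw [Submodule.span_mul_span]
    apply Submodule.span_mono
    rintro z hz
    rw [Set.mem_mul] at hz
    obtain ⟨a, ⟨n, v, hn, rfl⟩, b, ⟨m, w, hm, rfl⟩, rfl⟩ := hz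
    exact ⟨n + m, _, by omega, (genP_mul R n m v w)⟩
  exact h (Submodule.mul_mem_mul hx hy)

lemma listProd_mem_span_Sgen (l : List (TensorAlgebra R V))
    (h : ∀ x ∈ l, x ∈ Submodule.span R (Sgen R 1)) :
    l.prod ∈ Submodule.span R (Sgen R l.length) := by
  induction l with
  | nil =>
      refine Submodule.subset_span ⟨0, fun _ => 0, le_refl 0, ?_⟩
      simp [genP]
  | cons a t ih =>
      rw [List.prod_cons, List.length_cons, add_comm t.length 1]
      exact mul_mem_span_Sgen R (h a (by simp)) (ih fun x hx => h x (by simp [hx]))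

end

section core
variable {R V : Type*} [CommRing R] [AddCommGroup V] [Module R V]

lemma core_cancel (k : ℕ) (hk : 1 ≤ k)
    (φ : MultilinearMap R (fun _ : Fin k => V) (TensorAlgebra R V))
    (D : TensorAlgebra R V →ₗ[R] TensorAlgebra R V)
    (hD : ∀ (n : ℕ) (v : ℕ → V),
      D (((List.range n).map fun j => TensorAlgebra.ι R (v j)).prod)
        = ∑ i ∈ (Finset.range (n + 1)).filter (fun i => i + k ≤ n),
            ((List.range i).map fun j => TensorAlgebra.ι R (v j)).prod
              * φ (fun t : Fin k => v (i + (t : ℕ)))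
              * (((List.range n).drop (i + k)).map fun j => TensorAlgebra.ι R (v j)).prod)
    (p q r : ℕ) (hp : 1 ≤ p) (hq : k ≤ q + 1) (hr : 1 ≤ r) (u : ℕ → V) :
    D (genP R (p + q + r) u)
      - D (genP R (p + q) u) * genP R r (fun j => u (p + q + j))
      - genP R p u * D (genP R (q + r) (fun j => u (p + j)))
      + genP R p u * D (genP R q (fun j => u (p + j))) * genP R r (fun j => u (p + q + j))
      = 0 := by
  have hD' : ∀ (n : ℕ) (v : ℕ → V),
      D (genP R n v)
        = ∑ i ∈ (Finset.range (n + 1)).filter (fun i => i + k ≤ n),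
            genP R i v * φ (fun t : Fin k => v (i + (t : ℕ)))
              * (((List.range n).drop (i + k)).map fun j => TensorAlgebra.ι R (v j)).prod :=
    fun n v => hD n v
  have E1 : D (genP R (p + q + r) u)
      = ∑ i ∈ (Finset.range (p + q + r + 1)).filter (fun i => i + k ≤ p + q + r),
          genP R i u * φ (fun t : Fin k => u (i + (t : ℕ)))
            * (((List.range (p + q + r)).drop (i + k)).map
                fun j => TensorAlgebra.ι R (u j)).prod := hD' (p + q + r) u
  have E2 : D (genP R (p + q) u) * genP R r (fun j => u (p + q + j))
      = ∑ i ∈ (Finset.range (p + q + r + 1)).filter (fun i => i + k ≤ p + q),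
          genP R i u * φ (fun t : Fin k => u (i + (t : ℕ)))
            * (((List.range (p + q + r)).drop (i + k)).map
                fun j => TensorAlgebra.ι R (u j)).prod := by
    rw [hD' (p + q) u, Finset.sum_mul]
    rw [show (Finset.range (p + q + 1)).filter (fun i => i + k ≤ p + q)
        = (Finset.range (p + q + r + 1)).filter (fun i => i + k ≤ p + q) from by
      ext i; simp only [Finset.mem_filter, Finset.mem_range]; omega]
    refine Finset.sum_congr rfl fun i hi => ?_
    simp only [Finset.mem_filter, Finset.mem_range] at hi
    rw [mul_assoc]
    congr 1
    rw [drop_range_add (p + q) r (i + k) hi.2, List.map_append, List.prod_append]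
    congr 1
    rw [List.map_map]
    rfl
  have E3 : genP R p u * D (genP R (q + r) (fun j => u (p + j)))
      = ∑ i ∈ (Finset.range (p + q + r + 1)).filter
            (fun i => p ≤ i ∧ i + k ≤ p + q + r),
          genP R i u * φ (fun t : Fin k => u (i + (t : ℕ)))
            * (((List.range (p + q + r)).drop (i + k)).map
                fun j => TensorAlgebra.ι R (u j)).prod := by
    rw [hD' (q + r) (fun j => u (p + j)), Finset.mul_sum]
    rw [show (Finset.range (p + q + r + 1)).filter
          (fun i => p ≤ i ∧ i + k ≤ p + q + r)
        = ((Finset.range (q + r + 1)).filter (fun i => i + k ≤ q + r)).map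
            ⟨(p + ·), add_right_injective p⟩ from by
      ext i
      simp only [Finset.mem_filter, Finset.mem_range, Finset.mem_map,
        Function.Embedding.coeFn_mk]
      constructor
      · rintro ⟨h1, h2, h3⟩; exact ⟨i - p, ⟨by omega, by omega⟩, by omega⟩
      · rintro ⟨j, ⟨h1, h2⟩, rfl⟩; omega]
    rw [Finset.sum_map]
    refine Finset.sum_congr rfl fun i hi => ?_
    simp only [Finset.mem_filter, Finset.mem_range] at hi
    simp only [Function.Embedding.coeFn_mk]
    rw [← mul_assoc, ← mul_assoc, ← genP_add]
    congr 2
    · exact congrArg φ (funext fun t => by rw [add_assoc])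
    · rw [show p + i + k = p + (i + k) from by omega,
        show p + q + r = p + (q + r) from by omega, drop_range_shift p (q + r) (i + k),
        List.map_map]
      rfl
  have E4 : genP R p u * D (genP R q (fun j => u (p + j)))
          * genP R r (fun j => u (p + q + j))
      = ∑ i ∈ (Finset.range (p + q + r + 1)).filter
            (fun i => p ≤ i ∧ i + k ≤ p + q),
          genP R i u * φ (fun t : Fin k => u (i + (t : ℕ)))
            * (((List.range (p + q + r)).drop (i + k)).map
                fun j => TensorAlgebra.ι R (u j)).prod := by
    rw [hD' q (fun j => u (p + j)), Finset.mul_sum, Finset.sum_mul]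
    rw [show (Finset.range (p + q + r + 1)).filter
          (fun i => p ≤ i ∧ i + k ≤ p + q)
        = ((Finset.range (q + 1)).filter (fun i => i + k ≤ q)).map
            ⟨(p + ·), add_right_injective p⟩ from by
      ext i
      simp only [Finset.mem_filter, Finset.mem_range, Finset.mem_map,
        Function.Embedding.coeFn_mk]
      constructor
      · rintro ⟨h1, h2, h3⟩; exact ⟨i - p, ⟨by omega, by omega⟩, by omega⟩
      · rintro ⟨j, ⟨h1, h2⟩, rfl⟩; omega]
    rw [Finset.sum_map]
    refine Finset.sum_congr rfl fun i hi => ?_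
    simp only [Finset.mem_filter, Finset.mem_range] at hi
    simp only [Function.Embedding.coeFn_mk]
    rw [← mul_assoc (genP R p u), ← mul_assoc (genP R p u), ← genP_add]
    rw [mul_assoc (genP R (p + i) u * φ _)]
    rw [mul_assoc (genP R (p + i) u)]
    rw [← mul_assoc (genP R (p + i) u)]
    congr 2
    · exact congrArg φ (funext fun t => by rw [add_assoc])
    · rw [show p + i + k = p + (i + k) from by omega,
        show p + q + r = p + (q + r) from by omega, drop_range_shift p (q + r) (i + k),
        drop_range_add q r (i + k) hi.2, List.map_append, List.map_append,
        List.prod_append, List.map_map, List.map_map, List.map_map]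
      refine congrArg₂ (· * ·) rfl ?_
      show ((List.range r).map fun j => TensorAlgebra.ι R (u (p + q + j))).prod = _
      refine congrArg List.prod (List.map_congr_left fun j hj => ?_)
      show TensorAlgebra.ι R (u (p + q + j)) = TensorAlgebra.ι R (u (p + (q + j)))
      rw [add_assoc]
  rw [E1, E2, E3, E4]
  rw [Finset.sum_filter, Finset.sum_filter, Finset.sum_filter, Finset.sum_filter,
    ← Finset.sum_sub_distrib, ← Finset.sum_sub_distrib, ← Finset.sum_add_distrib]
  refine Finset.sum_eq_zero fun i _ => ?_
  split_ifs <;> first | (exfalso; omega) | abel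

end core

section bzero
variable {R V : Type*} [CommRing R] [AddCommGroup V] [Module R V]

lemma Bzero (k : ℕ) (hk : 1 ≤ k)
    (φ : MultilinearMap R (fun _ : Fin k => V) (TensorAlgebra R V))
    (D : TensorAlgebra R V →ₗ[R] TensorAlgebra R V)
    (hD : ∀ (n : ℕ) (v : ℕ → V),
      D (((List.range n).map fun j => TensorAlgebra.ι R (v j)).prod)
        = ∑ i ∈ (Finset.range (n + 1)).filter (fun i => i + k ≤ n),
            ((List.range i).map fun j => TensorAlgebra.ι R (v j)).prod
              * φ (fun t : Fin k => v (i + (t : ℕ)))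
              * (((List.range n).drop (i + k)).map fun j => TensorAlgebra.ι R (v j)).prod)
    {a b c : TensorAlgebra R V}
    (ha : a ∈ Submodule.span R (Sgen R 1))
    (hb : b ∈ Submodule.span R (Sgen R (k - 1)))
    (hc : c ∈ Submodule.span R (Sgen R 1)) :
    D (a * b * c) - D (a * b) * c - a * D (b * c) + a * D b * c = 0 := by
  induction ha using Submodule.span_induction with
  | zero => simp
  | add x y hx hy ihx ihy =>
      have h : D ((x + y) * b * c) - D ((x + y) * b) * c - (x + y) * D (b * c)
            + (x + y) * D b * c
          = (D (x * b * c) - D (x * b) * c - x * D (b * c) + x * D b * c)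
            + (D (y * b * c) - D (y * b) * c - y * D (b * c) + y * D b * c) := by
        simp only [add_mul, map_add]
        abel
      rw [h, ihx, ihy, add_zero]
  | smul r x hx ihx =>
      simp only [smul_mul_assoc, map_smul, ← smul_sub, ← smul_add, ihx, smul_zero]
  | mem a hamem =>
    induction hc using Submodule.span_induction with
    | zero => simp
    | add x y hx hy ihx ihy =>
        have h : D (a * b * (x + y)) - D (a * b) * (x + y) - a * D (b * (x + y))
              + a * D b * (x + y)
            = (D (a * b * x) - D (a * b) * x - a * D (b * x) + a * D b * x)
              + (D (a * b * y) - D (a * b) * y - a * D (b * y) + a * D b * y) := by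
          simp only [mul_add, map_add]
          abel
        rw [h, ihx, ihy, add_zero]
    | smul r x hx ihx =>
        simp only [mul_smul_comm, map_smul, smul_mul_assoc, ← smul_sub, ← smul_add,
          ihx, smul_zero]
    | mem c hcmem =>
      induction hb using Submodule.span_induction with
      | zero => simp
      | add x y hx hy ihx ihy =>
          have h : D (a * (x + y) * c) - D (a * (x + y)) * c - a * D ((x + y) * c)
                + a * D (x + y) * c
              = (D (a * x * c) - D (a * x) * c - a * D (x * c) + a * D x * c)
                + (D (a * y * c) - D (a * y) * c - a * D (y * c) + a * D y * c) := by
            simp only [mul_add, add_mul, map_add]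
            abel
          rw [h, ihx, ihy, add_zero]
      | smul r x hx ihx =>
          simp only [mul_smul_comm, smul_mul_assoc, map_smul, ← smul_sub, ← smul_add,
            ihx, smul_zero]
      | mem b hbmem =>
          obtain ⟨p, va, hp, rfl⟩ := hamem
          obtain ⟨q, vb, hq, rfl⟩ := hbmem
          obtain ⟨r, vc, hr, rfl⟩ := hcmem
          set u : ℕ → V := fun j =>
            if j < p then va j else if j < p + q then vb (j - p) else vc (j - p - q)
            with hu
          have hA : genP R p va = genP R p u :=
            genP_congr R fun j hj => by simp only [hu]; rw [if_pos hj]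
          have hB : genP R q vb = genP R q (fun j => u (p + j)) :=
            genP_congr R fun j hj => by
              simp only [hu]
              rw [if_neg (by omega), if_pos (by omega), Nat.add_sub_cancel_left]
          have hC : genP R r vc = genP R r (fun j => u (p + q + j)) :=
            genP_congr R fun j hj => by
              simp only [hu]
              rw [if_neg (by omega), if_neg (by omega)]
              congr 1
              omega
          rw [hA, hB, hC]
          have hAB : genP R p u * genP R q (fun j => u (p + j)) = genP R (p + q) u :=
            (genP_add R p q u).symm
          have hBC : genP R q (fun j => u (p + j)) * genP R r (fun j => u (p + q + j))
              = genP R (q + r) (fun j => u (p + j)) := by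
            rw [genP_add R q r (fun j => u (p + j))]
            congr 1
            exact genP_congr R fun j hj => by rw [add_assoc]
          have hABC : genP R p u * genP R q (fun j => u (p + j))
                * genP R r (fun j => u (p + q + j)) = genP R (p + q + r) u := by
            rw [hAB, genP_add R (p + q) r u]
          rw [hABC, hAB, hBC]
          exact core_cancel k hk φ D hD p q r hp (by omega) hr u

end bzero


/-- Let `T(V) = ⊕_{n≥1} V^{⊗n}` be the non-unital tensor algebra, realized here as the
augmentation submodule (spanned by products of `n ≥ 1` generators) of `TensorAlgebra R V`.
For `f ∈ (V*)^{⊗k} ⊗ T(V)`, i.e. a `k`-multilinear map `φ : V^k → T(V)`, the operator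
`ρ(f) = Σ_{i+k+m=n} id^{⊗i} ⊗ ι(f) ⊗ id^{⊗m}` (a linear operator `D` acting on products
of generators by the window-sum formula) is a differential operator of noncommutative
order at most `k`: the Börjeson product `b_{k+1}^{ρ(f)}` vanishes identically on `T(V)`. -/
theorem stmt12 {R V : Type*} [CommRing R] [AddCommGroup V] [Module R V]
    (k : ℕ) (hk : 1 ≤ k)
    (φ : MultilinearMap R (fun _ : Fin k => V) (TensorAlgebra R V))
    (D : TensorAlgebra R V →ₗ[R] TensorAlgebra R V)
    (hD : ∀ (n : ℕ) (v : ℕ → V),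
      D (((List.range n).map fun j => TensorAlgebra.ι R (v j)).prod)
        = ∑ i ∈ (Finset.range (n + 1)).filter (fun i => i + k ≤ n),
            ((List.range i).map fun j => TensorAlgebra.ι R (v j)).prod
              * φ (fun t : Fin k => v (i + (t : ℕ)))
              * (((List.range n).drop (i + k)).map fun j => TensorAlgebra.ι R (v j)).prod)
    (as : List (TensorAlgebra R V)) (hlen : as.length = k + 1)
    (hmem : ∀ x ∈ as, x ∈ Submodule.span R
      {y : TensorAlgebra R V | ∃ (n : ℕ) (v : ℕ → V), 1 ≤ n ∧
        y = ((List.range n).map fun j => TensorAlgebra.ι R (v j)).prod}) :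
    borL (⇑D) as = 0 := by
  have hD1 : D 1 = 0 := by
    have h := hD 0 (fun _ => 0)
    rw [show (Finset.range (0 + 1)).filter (fun i => i + k ≤ 0) = ∅ from by
        ext i; simp; omega,
      Finset.sum_empty] at h
    simpa using h
  obtain ⟨a, l, rfl⟩ : ∃ a l, as = a :: l := by
    cases as with
    | nil => simp at hlen
    | cons a l => exact ⟨a, l, rfl⟩
  obtain ⟨b, t, rfl⟩ : ∃ b t, l = b :: t := by
    cases l with
    | nil => simp at hlen; omega
    | cons b t => exact ⟨b, t, rfl⟩
  have hmem' : ∀ x ∈ a :: b :: t, x ∈ Submodule.span R (Sgen R 1) := hmem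
  have ha' : a ∈ Submodule.span R (Sgen R 1) := hmem' a (by simp)
  cases t with
  | nil =>
    have hk1 : k = 1 := by simp at hlen; omega
    have hb' : b ∈ Submodule.span R (Sgen R 1) := hmem' b (by simp)
    have h1 : (1 : TensorAlgebra R V) ∈ Submodule.span R (Sgen R (k - 1)) := by
      refine Submodule.subset_span ⟨0, fun _ => 0, by omega, ?_⟩
      simp [genP]
    have hmain := Bzero k hk φ D hD ha' h1 hb'
    simp only [mul_one, one_mul, hD1, mul_zero, zero_mul, add_zero] at hmain
    show D (a * b) - D a * b - a * D b + a * D 0 * b = 0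
    rw [map_zero, mul_zero, zero_mul, add_zero]
    exact hmain
  | cons m0 mt =>
    set c := (b :: m0 :: mt).getLast (List.cons_ne_nil b (m0 :: mt)) with hcdef
    set mid := (b :: m0 :: mt).dropLast with hmiddef
    have hsplit : mid ++ [c] = b :: m0 :: mt := List.dropLast_append_getLast _
    have hmidlen : mid.length = k - 1 := by
      have : (a :: b :: m0 :: mt).length = k + 1 := hlen
      simp only [hmiddef, List.length_dropLast, List.length_cons] at this ⊢
      omega
    have hQ : mid.prod ∈ Submodule.span R (Sgen R (k - 1)) := by
      rw [← hmidlen]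
      refine listProd_mem_span_Sgen R mid fun x hx => ?_
      exact hmem' x (List.mem_cons_of_mem a (List.dropLast_subset _ hx))
    have hc' : c ∈ Submodule.span R (Sgen R 1) :=
      hmem' c (List.mem_cons_of_mem a (List.getLast_mem _))
    have hmain := Bzero k hk φ D hD ha' hQ hc'
    have e0 : (b :: m0 :: mt).prod = mid.prod * c := by
      rw [← hsplit]; simp
    have e1 : listProd (a :: b :: m0 :: mt) = a * (mid.prod * c) := by
      rw [listProd_eq_prod, List.prod_cons, e0]
    have e3 : listProd ((a :: b :: m0 :: mt).dropLast) = a * mid.prod := by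
      show listProd (a :: mid) = _
      rw [listProd_eq_prod, List.prod_cons]
    have e4 : listProd (b :: m0 :: mt) = mid.prod * c := by
      rw [listProd_eq_prod, e0]
    have e5 : listProd ((b :: m0 :: mt).dropLast) = mid.prod := by
      show listProd (b :: (m0 :: mt).dropLast) = _
      rw [listProd_eq_prod]
      rfl
    show D (listProd (a :: b :: m0 :: mt))
        - D (listProd ((a :: b :: m0 :: mt).dropLast)) * c
        - a * D (listProd (b :: m0 :: mt))
        + a * D (listProd ((b :: m0 :: mt).dropLast)) * c = 0
    rw [e1, e3, e4, e5, ← mul_assoc]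
    exact hmain
end

section
/- Let f(q,z) be the formal power series in z with coefficients in polynomials in q whose coefficient of z^n q^{2k} is the Narayana number (1/(n-1))·binomial(n-1,k)·binomial(n-1,k+1) for n ≥ 2 (and f has linear term z). Then f satisfies the functional equation q² f(q,z)² − f(q,z)(1 − z + z q²) + z = 0. -/
open Finset

/-- Narayana-type coefficient. -/
def cN (n k : ℕ) : ℚ :=
  ((n : ℚ) - 1)⁻¹ * (((n - 1).choose k : ℕ) : ℚ) * (((n - 1).choose (k + 1) : ℕ) : ℚ)

lemma cN_zero {n k : ℕ} (h : n ≤ k + 1) : cN n k = 0 := by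
  have : (n - 1).choose (k + 1) = 0 := Nat.choose_eq_zero_of_lt (by omega)
  simp [cN, this]

/-- Universal cast identity for binomial coefficients. -/
lemma R1 (m k : ℕ) : ((k : ℚ) + 1) * (m.choose (k+1) : ℕ) = ((m : ℚ) - k) * (m.choose k : ℕ) := by
  rcases le_or_gt (k+1) m with h | h
  · have hnat := Nat.choose_succ_right_eq m k
    have hk : k ≤ m := by omega
    have : ((m.choose (k+1) * (k+1) : ℕ) : ℚ) = ((m.choose k * (m - k) : ℕ) : ℚ) := by
      rw [hnat]
    push_cast [Nat.cast_sub hk] at this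
    linarith
  · rcases Nat.lt_or_ge k m with h2 | h2
    · omega
    rcases eq_or_lt_of_le h2 with h3 | h3
    · subst h3
      simp [Nat.choose_eq_zero_of_lt h]
    · simp [Nat.choose_eq_zero_of_lt h3, Nat.choose_eq_zero_of_lt h]

lemma cN_k0 (m : ℕ) : cN (m+2) 0 = 1 := by
  have h : ((m:ℚ)+1) ≠ 0 := by positivity
  simp only [cN, show m+2-1 = m+1 from rfl, Nat.choose_zero_right, Nat.choose_one_right]
  push_cast [Nat.choose_one_right]
  rw [show (m:ℚ)+2-1 = (m:ℚ)+1 by ring]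
  field_simp

lemma key0 (p : ℕ) :
    ((p:ℚ)+4) * cN (p+4) 0 + ((p:ℚ)+1) * cN (p+2) 0 = (2*(p:ℚ)+5) * cN (p+3) 0 := by
  rw [show p+4 = (p+2)+2 from rfl, show p+3 = (p+1)+2 from rfl, cN_k0, cN_k0, cN_k0]
  ring

lemma cN_k1 (m : ℕ) : cN (m+2) 1 = (m:ℚ)*((m:ℚ)+1)/2 := by
  have h : ((m:ℚ)+1) ≠ 0 := by positivity
  have h1 := R1 (m+1) 1
  push_cast [Nat.choose_one_right] at h1
  have hc : (((m+1).choose 2 : ℕ) : ℚ) = (m:ℚ)*((m:ℚ)+1)/2 := by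
    rw [eq_div_iff (two_ne_zero)]
    linear_combination h1
  simp only [cN, show m+2-1 = m+1 from rfl, Nat.choose_one_right]
  push_cast [hc]
  rw [show (m:ℚ)+2-1 = (m:ℚ)+1 by ring]
  field_simp

lemma key1 (p : ℕ) :
    ((p:ℚ)+4) * cN (p+4) 1 + ((p:ℚ)+1) * (-2 * cN (p+2) 0 + cN (p+2) 1)
      = (2*(p:ℚ)+5) * (cN (p+3) 1 + cN (p+3) 0) := by
  rw [show p+4 = (p+2)+2 from rfl, show p+3 = (p+1)+2 from rfl, cN_k0, cN_k0, cN_k1, cN_k1,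
    cN_k1]
  push_cast
  ring

set_option maxHeartbeats 2000000 in
lemma key2 (p j : ℕ) :
    ((p:ℚ)+4) * cN (p+4) (j+2)
      + ((p:ℚ)+1) * (cN (p+2) j - 2 * cN (p+2) (j+1) + cN (p+2) (j+2))
    = (2*(p:ℚ)+5) * (cN (p+3) (j+2) + cN (p+3) (j+1)) := by
  have hp1 : ((p:ℚ)+1) ≠ 0 := by positivity
  have hp2 : ((p:ℚ)+2) ≠ 0 := by positivity
  have hp3 : ((p:ℚ)+3) ≠ 0 := by positivity
  have hj1 : ((j:ℚ)+1) ≠ 0 := by positivity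
  have hj2 : ((j:ℚ)+2) ≠ 0 := by positivity
  have hj3 : ((j:ℚ)+3) ≠ 0 := by positivity
  have e1 : (p+3).choose (j+2)
      = (p+1).choose j + 2 * ((p+1).choose (j+1)) + (p+1).choose (j+2) := by
    rw [show p+3 = (p+2)+1 from rfl, show p+2 = (p+1)+1 from rfl]
    simp [Nat.choose_succ_succ]
    ring
  have e2 : (p+3).choose (j+3)
      = (p+1).choose (j+1) + 2 * ((p+1).choose (j+2)) + (p+1).choose (j+3) := by
    rw [show p+3 = (p+2)+1 from rfl, show p+2 = (p+1)+1 from rfl]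
    simp [Nat.choose_succ_succ]
    ring
  have e3 : (p+2).choose (j+1) = (p+1).choose j + (p+1).choose (j+1) :=
    Nat.choose_succ_succ _ _
  have e4 : (p+2).choose (j+2) = (p+1).choose (j+1) + (p+1).choose (j+2) :=
    Nat.choose_succ_succ _ _
  have e5 : (p+2).choose (j+3) = (p+1).choose (j+2) + (p+1).choose (j+3) :=
    Nat.choose_succ_succ _ _
  have h1 := R1 (p+1) j
  have h2 := R1 (p+1) (j+1)
  have h3 := R1 (p+1) (j+2)
  simp only [cN, show p+4-1 = p+3 from rfl, show p+3-1 = p+2 from rfl,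
    show p+2-1 = p+1 from rfl, e1, e2, e3, e4, e5] at *
  push_cast at h1 h2 h3 ⊢
  rw [show (p:ℚ)+4-1 = (p:ℚ)+3 by ring, show (p:ℚ)+3-1 = (p:ℚ)+2 by ring,
    show (p:ℚ)+2-1 = (p:ℚ)+1 by ring]
  set x0 := (((p+1).choose j : ℕ) : ℚ) with hx0
  set x1 := (((p+1).choose (j+1) : ℕ) : ℚ) with hx1
  set x2 := (((p+1).choose (j+2) : ℕ) : ℚ) with hx2
  set x3 := (((p+1).choose (j+3) : ℕ) : ℚ) with hx3
  have f1 : x1 = ((p:ℚ)+1-j) * x0 / ((j:ℚ)+1) := by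
    rw [eq_div_iff hj1]; linear_combination h1
  have f2 : x2 = ((p:ℚ)-j) * x1 / ((j:ℚ)+2) := by
    rw [eq_div_iff hj2]; linear_combination h2
  have f3 : x3 = ((p:ℚ)-1-j) * x2 / ((j:ℚ)+3) := by
    rw [eq_div_iff hj3]; linear_combination h3
  rw [f3, f2, f1]
  field_simp
  ring

open Polynomial in
noncomputable def A : ℕ → Polynomial ℚ := fun n =>
  if n = 1 then 1 else
    ∑ k ∈ Finset.range n,
      Polynomial.C (((n : ℚ) - 1)⁻¹ * (((n - 1).choose k : ℕ) : ℚ)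
          * (((n - 1).choose (k + 1) : ℕ) : ℚ)) * Polynomial.X ^ (2 * k)

namespace StmtAux
open Polynomial

/-- shift of a coefficient function -/
def sh (g : ℕ → ℚ) : ℕ → ℚ
  | 0 => 0
  | (k+1) => g k

@[simp] lemma sh_zero (g : ℕ → ℚ) : sh g 0 = 0 := rfl
@[simp] lemma sh_succ (g : ℕ → ℚ) (k : ℕ) : sh g (k+1) = g k := rfl

lemma A_ext (n M : ℕ) (h1 : n ≠ 1) (h2 : n ≤ M) :
    A n = ∑ k ∈ Finset.range M, C (cN n k) * X ^ (2*k) := by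
  have : A n = ∑ k ∈ Finset.range n, C (cN n k) * X ^ (2*k) := by
    rw [A]
    simp only [h1, if_false, cN]
  rw [this]
  apply Finset.sum_subset (Finset.range_subset_range.2 h2)
  intro k _ hk
  rw [cN_zero (by simp only [Finset.mem_range, not_lt] at hk; omega), map_zero, zero_mul]

lemma Cmul_sum (a : ℚ) (g : ℕ → ℚ) (M : ℕ) :
    C a * ∑ k ∈ Finset.range M, C (g k) * X ^ (2*k)
      = ∑ k ∈ Finset.range M, C (a * g k) * X ^ (2*k) := by
  rw [Finset.mul_sum]
  exact Finset.sum_congr rfl fun k _ => by rw [← mul_assoc, ← C_mul]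

lemma sh_sum (g : ℕ → ℚ) (M : ℕ) :
    X^2 * ∑ k ∈ Finset.range M, C (g k) * X ^ (2*k)
      = ∑ k ∈ Finset.range (M+1), C (sh g k) * X ^ (2*k) := by
  rw [Finset.sum_range_succ']
  simp only [sh_zero, sh_succ, map_zero, zero_mul, add_zero, Finset.mul_sum]
  exact Finset.sum_congr rfl fun k _ => by ring

lemma recA (p : ℕ) :
    C ((p:ℚ)+4) * A (p+4) + C ((p:ℚ)+1) * ((X^2-1)^2 * A (p+2))
      = C (2*(p:ℚ)+5) * ((X^2+1) * A (p+3)) := by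
  set M := p + 5 with hM
  have h4 : A (p+4) = ∑ k ∈ Finset.range (M+2), C (cN (p+4) k) * X ^ (2*k) :=
    A_ext _ _ (by omega) (by omega)
  have h2 : A (p+2) = ∑ k ∈ Finset.range (M+2), C (cN (p+2) k) * X ^ (2*k) :=
    A_ext _ _ (by omega) (by omega)
  have h3 : A (p+3) = ∑ k ∈ Finset.range (M+2), C (cN (p+3) k) * X ^ (2*k) :=
    A_ext _ _ (by omega) (by omega)
  have t2 : X^2 * (X^2 * A (p+2))
      = ∑ k ∈ Finset.range (M+2), C (sh (sh (cN (p+2))) k) * X ^ (2*k) := by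
    rw [A_ext (p+2) M (by omega) (by omega), sh_sum, sh_sum]
  have t1 : X^2 * A (p+2)
      = ∑ k ∈ Finset.range (M+2), C (sh (cN (p+2)) k) * X ^ (2*k) := by
    rw [A_ext (p+2) (M+1) (by omega) (by omega), sh_sum]
  have t3 : X^2 * A (p+3)
      = ∑ k ∈ Finset.range (M+2), C (sh (cN (p+3)) k) * X ^ (2*k) := by
    rw [A_ext (p+3) (M+1) (by omega) (by omega), sh_sum]
  have expand : C ((p:ℚ)+4) * A (p+4) + C ((p:ℚ)+1) * ((X^2-1)^2 * A (p+2))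
      = C ((p:ℚ)+4) * A (p+4) + (C ((p:ℚ)+1) * (X^2*(X^2*A (p+2)))
        - C (2*((p:ℚ)+1)) * (X^2 * A (p+2)) + C ((p:ℚ)+1) * A (p+2)) := by
    rw [C_mul, map_ofNat]
    ring
  have expand2 : C (2*(p:ℚ)+5) * ((X^2+1) * A (p+3))
      = C (2*(p:ℚ)+5) * (X^2 * A (p+3)) + C (2*(p:ℚ)+5) * A (p+3) := by
    ring
  rw [expand, expand2, h4, t2, t1, t3, h2, h3, Cmul_sum, Cmul_sum, Cmul_sum, Cmul_sum,
    Cmul_sum, Cmul_sum, ← Finset.sum_sub_distrib, ← Finset.sum_add_distrib,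
    ← Finset.sum_add_distrib, ← Finset.sum_add_distrib]
  apply Finset.sum_congr rfl
  intro k _
  rw [← sub_mul, ← add_mul, ← add_mul, ← add_mul, ← C_sub, ← C_add, ← C_add, ← C_add]
  congr 1
  match k with
  | 0 =>
    simp only [sh_zero, mul_zero, sub_zero, add_zero, zero_add]
    exact congrArg C (by linear_combination key0 p)
  | 1 =>
    simp only [sh_succ, sh_zero, mul_zero, add_zero, zero_add]
    exact congrArg C (by linear_combination key1 p)
  | (j+2) =>
    simp only [sh_succ]
    exact congrArg C (by linear_combination key2 p j)

lemma A_zero : A 0 = 0 := by simp [A]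

lemma A_one : A 1 = 1 := by simp [A]

lemma A_two : A 2 = 1 := by
  rw [A]
  norm_num [Finset.sum_range_succ]

lemma A_three : A 3 = 1 + X^2 := by
  rw [A]
  norm_num [Finset.sum_range_succ]
  have h2 : (Polynomial.C ((1:ℚ)/2)) * 2 = 1 := by
    rw [show (2:Polynomial ℚ) = Polynomial.C (2:ℚ) from (map_ofNat _ 2).symm, ← C_mul]
    norm_num
  linear_combination (1 + Polynomial.X ^ 2) * h2

end StmtAux

namespace StmtAux

noncomputable section PS

open PowerSeries

abbrev Rr : Type := Polynomial ℚ

def q2 : Rr := Polynomial.X ^ 2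
def d1 : Rr := -2 * (q2 + 1)
def d2 : Rr := (q2 - 1) ^ 2

def fps : PowerSeries Rr := PowerSeries.mk A
def Lps : PowerSeries Rr := 1 - PowerSeries.X + PowerSeries.X * PowerSeries.C q2
def DD : PowerSeries Rr :=
  1 + PowerSeries.C d1 * PowerSeries.X + PowerSeries.C d2 * PowerSeries.X ^ 2

def sC : ℕ → Rr
  | 0 => 1
  | 1 => -(q2 + 1)
  | (m+2) => -2 * q2 * A (m + 2)

def s : PowerSeries Rr := PowerSeries.mk sC

@[simp] lemma sC_zero : sC 0 = 1 := rfl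
@[simp] lemma sC_one : sC 1 = -(q2 + 1) := rfl
lemma sC_ss (m : ℕ) : sC (m+2) = -2 * q2 * A (m + 2) := rfl

lemma DD_eq : DD = Lps ^ 2 - PowerSeries.C (4 * q2) * PowerSeries.X := by
  simp only [DD, Lps, d1, d2, map_mul, map_add, map_sub, map_neg, map_one, map_ofNat, map_pow]
  ring

lemma s_eq : s = Lps - PowerSeries.C (2 * q2) * fps := by
  ext m : 1
  match m with
  | 0 =>
    simp [s, Lps, fps, coeff_C_mul, A_zero]
  | 1 =>
    simp only [s, Lps, fps, coeff_mk, map_sub, map_add, coeff_one, coeff_X,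
      coeff_succ_X_mul, coeff_C, coeff_C_mul, A_one, sC_one, d1]
    norm_num
    ring
  | (m+2) =>
    simp only [s, Lps, fps, coeff_mk, map_sub, map_add, coeff_one, coeff_X,
      coeff_succ_X_mul, coeff_C, coeff_C_mul, sC_ss,
      if_neg (show ¬(m+2 = 1) by omega), if_neg (show ¬(m+2 = 0) by omega),
      if_neg (show ¬(m+1 = 0) by omega)]
    ring

lemma coeff_DD_mul₂ (u : PowerSeries Rr) (m : ℕ) :
    (coeff (m+2)) (DD * u)
      = coeff (m+2) u + d1 * coeff (m+1) u + d2 * coeff m u := by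
  have : DD * u = u + PowerSeries.C d1 * (PowerSeries.X * u)
      + PowerSeries.C d2 * (PowerSeries.X ^ 2 * u) := by
    rw [DD]; ring
  rw [this, map_add, map_add, coeff_C_mul, coeff_C_mul, coeff_succ_X_mul,
    coeff_X_pow_mul]

lemma coeff_DD_mul₁ (u : PowerSeries Rr) :
    (coeff 1) (DD * u) = coeff 1 u + d1 * coeff 0 u := by
  have : DD * u = u + PowerSeries.C d1 * (PowerSeries.X * u)
      + PowerSeries.C d2 * (PowerSeries.X ^ 2 * u) := by
    rw [DD]; ring
  rw [this, map_add, map_add, coeff_C_mul, coeff_C_mul, coeff_succ_X_mul]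
  rw [show (PowerSeries.X ^ 2 * u : PowerSeries Rr) = PowerSeries.X * (PowerSeries.X * u) by ring,
    coeff_succ_X_mul, coeff_zero_X_mul]
  ring

lemma coeff_DD_mul₀ (u : PowerSeries Rr) :
    (coeff 0) (DD * u) = coeff 0 u := by
  have : DD * u = u + PowerSeries.C d1 * (PowerSeries.X * u)
      + PowerSeries.C d2 * (PowerSeries.X ^ 2 * u) := by
    rw [DD]; ring
  rw [this, map_add, map_add, coeff_C_mul, coeff_C_mul, coeff_zero_X_mul,
    show (PowerSeries.X ^ 2 * u : PowerSeries Rr) = PowerSeries.X * (PowerSeries.X * u) by ring,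
    coeff_zero_X_mul]
  ring


lemma dDD_eq : (d⁄dX Rr) DD
    = PowerSeries.C d1 + PowerSeries.C (2 * d2) * PowerSeries.X := by
  ext n : 1
  rw [coeff_derivative]
  match n with
  | 0 =>
    have h1 : (coeff 1) DD = d1 := by
      simp only [DD, map_add, map_one, coeff_one, coeff_C_mul, coeff_X]
      rw [show (PowerSeries.X ^ 2 : PowerSeries Rr) = PowerSeries.X * PowerSeries.X by ring,
        show (1:ℕ) = 0+1 from rfl, coeff_succ_X_mul, coeff_X]
      norm_num
    rw [h1]
    simp only [map_add, coeff_C_mul, coeff_X, coeff_C]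
    norm_num
  | 1 =>
    have h2 : (coeff 2) DD = d2 := by
      simp only [DD, map_add, map_one, coeff_one, coeff_C_mul, coeff_X]
      rw [show (PowerSeries.X ^ 2 : PowerSeries Rr) = PowerSeries.X * PowerSeries.X by ring,
        coeff_succ_X_mul, coeff_X]
      norm_num
    rw [h2]
    simp only [map_add, coeff_C_mul, coeff_X, coeff_C]
    norm_num
    ring
  | (n+2) =>
    have h3 : (coeff (n+3)) DD = 0 := by
      simp only [DD, map_add, map_one, coeff_one, coeff_C_mul, coeff_X]
      rw [show (PowerSeries.X ^ 2 : PowerSeries Rr) = PowerSeries.X * PowerSeries.X by ring,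
        show n+3 = (n+2)+1 from rfl, coeff_succ_X_mul, coeff_X]
      simp only [if_neg (show ¬(n+3 = 0) by omega), if_neg (show ¬(n+3 = 1) by omega),
        if_neg (show ¬(n+2 = 1) by omega)]
      ring
    rw [h3]
    simp only [map_add, coeff_C_mul, coeff_X, coeff_C,
      if_neg (show ¬(n+2 = 0) by omega), if_neg (show ¬(n+2 = 1) by omega)]
    ring

lemma coeff_dDD (m : ℕ) (u : PowerSeries Rr) :
    (coeff (m+1)) ((d⁄dX Rr) DD * u)
      = d1 * coeff (m+1) u + 2 * d2 * coeff m u := by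
  rw [dDD_eq, add_mul, map_add, coeff_C_mul, mul_assoc (PowerSeries.C (2*d2)),
    coeff_C_mul, coeff_succ_X_mul]

lemma coeff_dDD0 (u : PowerSeries Rr) :
    (coeff 0) ((d⁄dX Rr) DD * u) = d1 * coeff 0 u := by
  rw [dDD_eq, add_mul, map_add, coeff_C_mul, mul_assoc (PowerSeries.C (2*d2)),
    coeff_C_mul, coeff_zero_X_mul, mul_zero, add_zero]

lemma hODE : 2 * DD * ((d⁄dX Rr) s) = (d⁄dX Rr) DD * s := by
  have hsplit : 2 * DD * ((d⁄dX Rr) s)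
      = DD * ((d⁄dX Rr) s) + DD * ((d⁄dX Rr) s) := by ring
  ext m : 1
  rw [hsplit, map_add]
  match m with
  | 0 =>
    rw [coeff_DD_mul₀, coeff_dDD0, coeff_derivative]
    simp only [s, coeff_mk, sC_one, sC_zero, d1]
    push_cast
    simp only [show sC 1 = -(q2+1) from rfl, sC_zero, q2]
    ring
  | 1 =>
    rw [coeff_DD_mul₁, coeff_dDD 0, coeff_derivative, coeff_derivative]
    simp only [s, coeff_mk, sC_one, sC_zero, show sC 2 = -2*q2*A 2 from rfl, A_two, d1, d2]
    push_cast
    simp only [show sC 1 = -(q2+1) from rfl, sC_zero, q2]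
    ring
  | 2 =>
    rw [show (2:ℕ) = 0+2 from rfl, coeff_DD_mul₂, coeff_dDD 1, coeff_derivative,
      coeff_derivative, coeff_derivative]
    simp only [s, coeff_mk, sC_one, sC_zero, show sC 2 = -2*q2*A 2 from rfl,
      show sC 3 = -2*q2*A 3 from rfl, A_two, A_three, d1, d2, q2]
    push_cast
    simp only [show sC 1 = -(q2+1) from rfl, sC_zero, q2]
    ring
  | (m+3) =>
    rw [show m+3 = (m+1)+2 from rfl, coeff_DD_mul₂, coeff_dDD (m+2), coeff_derivative,
      coeff_derivative, coeff_derivative]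
    simp only [s, coeff_mk, show sC (m+1+2) = -2*q2*A (m+3) from rfl,
      show sC (m+1+1+1+1) = -2*q2*A (m+4) from rfl,
      show sC (m+1+1+1) = -2*q2*A (m+3) from rfl,
      show sC (m+2) = -2*q2*A (m+2) from rfl,
      show sC (m+1+1) = -2*q2*A (m+2) from rfl, d1, d2, q2]
    have hr := recA m
    simp only [map_add, map_mul, map_ofNat, Polynomial.C_eq_natCast, map_one] at hr
    push_cast
    linear_combination (-4 * Polynomial.X^2 : Rr) * hr

lemma sq_eq : s ^ 2 = DD := by
  have hds : (d⁄dX Rr) (s^2) = 2 * s * (d⁄dX Rr) s := by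
    rw [pow_two]
    show PowerSeries.derivativeFun (s * s) = _
    rw [PowerSeries.derivativeFun_mul]
    show s * PowerSeries.derivativeFun s + s * PowerSeries.derivativeFun s = _
    show s * (d⁄dX Rr) s + s * (d⁄dX Rr) s = _
    ring
  have h5 : DD * (d⁄dX Rr) (s^2) = (d⁄dX Rr) DD * (s^2) := by
    rw [hds]
    linear_combination s * hODE
  have hwode : DD * ((d⁄dX Rr) (s^2) - (d⁄dX Rr) DD)
      = (d⁄dX Rr) DD * (s^2 - DD) := by
    linear_combination h5
  have hw0 : (coeff 0) (s^2 - DD) = 0 := by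
    rw [map_sub]
    simp [coeff_zero_eq_constantCoeff, map_pow, s, DD, PowerSeries.constantCoeff_mk]
  have hwd : (d⁄dX Rr) (s^2 - DD) = (d⁄dX Rr) (s^2) - (d⁄dX Rr) DD := by
    exact map_sub _ _ _
  have hzero : ∀ n, (coeff n) (s^2 - DD) = 0 := by
    intro n
    induction n using Nat.strong_induction_on with
    | _ n ih =>
      match n with
      | 0 => exact hw0
      | (n+1) =>
        have h := congrArg (coeff n) (hwd ▸ hwode)
        match n with
        | 0 =>
          rw [coeff_DD_mul₀, coeff_dDD0, coeff_derivative] at h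
          rw [hw0] at h
          push_cast at h
          have : (coeff 1) (s^2 - DD) * 1 = 0 := by linear_combination h
          simpa using this
        | 1 =>
          rw [coeff_DD_mul₁, coeff_dDD 0, coeff_derivative, coeff_derivative] at h
          rw [ih 1 (by omega), ih 0 (by omega)] at h
          push_cast at h
          have h2 : (coeff 2) (s^2 - DD) * 2 = 0 := by linear_combination h
          have h3 : (2 : Rr) ≠ 0 := two_ne_zero
          rcases mul_eq_zero.mp h2 with h'|h'
          · exact h'
          · exact absurd h' h3
        | (n+2) =>
          rw [coeff_DD_mul₂, coeff_dDD (n+1), coeff_derivative, coeff_derivative,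
            coeff_derivative] at h
          rw [ih (n+2) (by omega), ih (n+1) (by omega)] at h
          have h2 : (coeff (n+3)) (s^2 - DD) * ((n:Rr)+3) = 0 := by
            push_cast at h
            linear_combination h
          have h3 : ((n:Rr)+3) ≠ 0 := by
            have : (((n+3 : ℕ)):Rr) ≠ 0 := Nat.cast_ne_zero.mpr (by omega)
            push_cast at this
            exact this
          rcases mul_eq_zero.mp h2 with h'|h'
          · exact h'
          · exact absurd h' h3
  have : s^2 - DD = 0 := by
    ext n : 1
    rw [hzero n, map_zero]
  linear_combination this

lemma main : PowerSeries.C q2 * fps ^ 2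
    - fps * (1 - PowerSeries.X + PowerSeries.X * PowerSeries.C q2)
    + PowerSeries.X = 0 := by
  have h := sq_eq
  rw [s_eq, DD_eq] at h
  have h4 : PowerSeries.C (4*q2) = 4 * PowerSeries.C q2 := by
    rw [map_mul, map_ofNat]
  have h2 : PowerSeries.C (2*q2) = 2 * PowerSeries.C q2 := by
    rw [map_mul, map_ofNat]
  rw [h4, h2] at h
  have hz : (4 * PowerSeries.C q2) * (PowerSeries.C q2 * fps ^ 2
      - fps * (1 - PowerSeries.X + PowerSeries.X * PowerSeries.C q2)
      + PowerSeries.X) = 0 := by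
    unfold Lps at h
    linear_combination h
  have hC : (4 * PowerSeries.C q2) ≠ 0 := by
    intro hh
    have h0 := congrArg (constantCoeff) hh
    simp only [map_mul, map_ofNat, PowerSeries.constantCoeff_C, map_zero] at h0
    have h1 := congrArg (fun p => Polynomial.coeff p 2) h0
    norm_num [q2, Polynomial.coeff_X_pow] at h1
  rcases mul_eq_zero.mp hz with h'|h'
  · exact absurd h' hC
  · exact h'

end PS
end StmtAux

/-- The generating function `f(q,z) = z + Σ_{n≥2} Σ_k N(n,k) q^{2k} z^n`, whose coefficient
of `z^n q^{2k}` is the Narayana number `(1/(n-1))·C(n-1,k)·C(n-1,k+1)`, satisfies the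
functional equation `q² f² − f(1 − z + z q²) + z = 0`. -/
theorem stmt13 :
    let f : PowerSeries (Polynomial ℚ) := PowerSeries.mk fun n =>
      if n = 1 then 1 else
        ∑ k ∈ Finset.range n,
          Polynomial.C (((n : ℚ) - 1)⁻¹ * (((n - 1).choose k : ℕ) : ℚ)
              * (((n - 1).choose (k + 1) : ℕ) : ℚ)) * Polynomial.X ^ (2 * k)
    PowerSeries.C (R := Polynomial ℚ) (Polynomial.X ^ 2) * f ^ 2
        - f * (1 - PowerSeries.X
            + PowerSeries.X * PowerSeries.C (R := Polynomial ℚ) (Polynomial.X ^ 2))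
        + PowerSeries.X = 0 := by
  intro f
  exact StmtAux.main
end
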